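/- In the Cartesian tree of an array A of distinct values, node v (identified with its inorder rank) has a left child if and only if v ≥ 2 and A[v] < A[v-1]. -/

import Mathlib

inductive BT where
  | leaf : BT
  | node : BT → BT → BT
deriving DecidableEq

namespace BT

/-- Number of nodes. -/
def size : BT → ℕ
  | leaf => 0
  | node l r => l.size + r.size + 1

/-- Inorder list of node positions (paths from the root; `false` = left step). -/
def inList : BT → List (List Bool)
  | leaf => []
  | node l r => (l.inList).map (List.cons false) ++ [] :: (r.inList).map (List.cons true)

/-- Preorder list of node positions. -/
def preList : BT → List (List Bool)
  | leaf => []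
  | node l r => [] :: ((l.preList).map (List.cons false) ++ (r.preList).map (List.cons true))

/-- Subtree rooted at a given position, if the position is valid. -/
def subtree? : BT → List Bool → Option BT
  | t, [] => some t
  | leaf, _ :: _ => none
  | node l r, b :: p => if b then r.subtree? p else l.subtree? p

/-- Size of the left spine (maximal path following left children, top node included). -/
def Lspine : BT → ℕ
  | leaf => 0
  | node l _ => l.Lspine + 1

/-- Size of the right spine. -/
def Rspine : BT → ℕ
  | leaf => 0
  | node _ r => r.Rspine + 1

/-- Size of the left inner spine of the root: right spine of the left child. -/
def lv : BT → ℕ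
  | leaf => 0
  | node l _ => l.Rspine

/-- Size of the right inner spine of the root: left spine of the right child. -/
def rv : BT → ℕ
  | leaf => 0
  | node _ r => r.Lspine

/-- Sum of `f` over all (sub)trees rooted at nodes of the tree. -/
def sumNodes (f : BT → ℕ) : BT → ℕ
  | leaf => 0
  | node l r => f (node l r) + sumNodes f l + sumNodes f r

/-- Number of leaf nodes (nodes with no children). -/
def leaves : BT → ℕ
  | leaf => 0
  | node leaf leaf => 1
  | node l r => leaves l + leaves r

end BT

/-- Longest common prefix of two paths: the LCA of two positions in a binary tree. -/
def lcp : List Bool → List Bool → List Bool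
  | a :: p, b :: q => if a = b then a :: lcp p q else []
  | _, _ => []

/-- Index of the minimum element of a list (0 if empty). -/
def minIdx {α : Type*} [LinearOrder α] (l : List α) : ℕ :=
  match l.argmin id with
  | none => 0
  | some a => l.idxOf a

/-- Cartesian tree construction with fuel. -/
def cartesianAux {α : Type*} [LinearOrder α] : ℕ → List α → BT
  | 0, _ => .leaf
  | _ + 1, [] => .leaf
  | n + 1, l@(_ :: _) =>
      .node (cartesianAux n (l.take (minIdx l))) (cartesianAux n (l.drop (minIdx l + 1)))

/-- The Cartesian tree of a list: root at the position of the minimum,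
recursively built on the prefix before and the suffix after the minimum. -/
def cartesian {α : Type*} [LinearOrder α] (l : List α) : BT :=
  cartesianAux l.length l

/-- `k` is the position of the minimum of `A` on the range `[i, j]`. -/
def isArgmin {α : Type*} [LinearOrder α] {n : ℕ} (A : Fin n → α) (i j k : Fin n) : Prop :=
  i ≤ k ∧ k ≤ j ∧ ∀ m, i ≤ m → m ≤ j → A k ≤ A m

/-- `k` is the position of the second smallest element of `A` on the range `[i, j]`. -/
def isSecondMin {α : Type*} [LinearOrder α] {n : ℕ} (A : Fin n → α) (i j k : Fin n) : Prop :=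
  i ≤ k ∧ k ≤ j ∧
    ∃ m, isArgmin A i j m ∧ k ≠ m ∧ ∀ l, i ≤ l → l ≤ j → l ≠ m → A k ≤ A l

/-- The node with inorder number `i` in `t` has a left child. -/
def hasLeftChildAt (t : BT) (i : ℕ) : Prop :=
  ∃ (p : List Bool) (ll lr r : BT),
    t.inList[i]? = some p ∧ t.subtree? p = some (.node (.node ll lr) r)

section MyAux

variable {α : Type*} [LinearOrder α]

lemma minIdx_lt_length {l : List α} (hl : l ≠ []) : minIdx l < l.length := by
  unfold minIdx
  cases h : l.argmin id with
  | none => exact absurd (List.argmin_eq_none.mp h) hl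
  | some a => exact List.idxOf_lt_length_iff.mpr (List.argmin_mem h)

lemma minIdx_le {l : List α} {j : ℕ} (hj : j < l.length) (hk : minIdx l < l.length) :
    l[minIdx l] ≤ l[j] := by
  cases h : l.argmin id with
  | none =>
    exfalso
    rw [List.argmin_eq_none] at h
    subst h; simp at hj
  | some a =>
    have hm : minIdx l = l.idxOf a := by unfold minIdx; rw [h]
    have ha : a ∈ l := List.argmin_mem h
    simp_rw [hm]
    rw [List.getElem_idxOf (List.idxOf_lt_length_iff.mpr ha)]
    exact List.le_of_mem_argmin (l.getElem_mem hj) h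

lemma minIdx_lt {l : List α} (hnd : l.Nodup) {j : ℕ} (hj : j < l.length)
    (hk : minIdx l < l.length) (hne : j ≠ minIdx l) : l[minIdx l] < l[j] := by
  refine lt_of_le_of_ne (minIdx_le hj hk) fun h => hne ?_
  exact ((List.Nodup.getElem_inj_iff hnd).mp h.symm)

lemma cartesianAux_congr : ∀ (m : ℕ) (k : ℕ) (l : List α), l.length ≤ m → l.length ≤ k →
    cartesianAux m l = cartesianAux k l := by
  intro m
  induction m using Nat.strong_induction_on with
  | _ m ih =>
    intro k l hm hk
    match l with
    | [] =>
      match m, k with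
      | 0, 0 => rfl
      | 0, _ + 1 => rfl
      | _ + 1, 0 => rfl
      | _ + 1, _ + 1 => rfl
    | x :: xs =>
      have hpos : 0 < (x :: xs).length := by simp
      match m, k, hm, hk with
      | m + 1, k + 1, hm, hk =>
        have hmin : minIdx (x :: xs) < (x :: xs).length := minIdx_lt_length (by simp)
        show BT.node _ _ = BT.node _ _
        have h1 : ((x :: xs).take (minIdx (x :: xs))).length ≤ m := by
          simp only [List.length_take]
          simp only [List.length_cons] at hm hmin ⊢
          omega
        have h2 : ((x :: xs).drop (minIdx (x :: xs) + 1)).length ≤ m := by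
          simp only [List.length_drop]
          simp only [List.length_cons] at hm ⊢
          omega
        have h1' : ((x :: xs).take (minIdx (x :: xs))).length ≤ k := by
          simp only [List.length_take]
          simp only [List.length_cons] at hk hmin ⊢
          omega
        have h2' : ((x :: xs).drop (minIdx (x :: xs) + 1)).length ≤ k := by
          simp only [List.length_drop]
          simp only [List.length_cons] at hk ⊢
          omega
        rw [ih m (Nat.lt_succ_self m) k _ h1 h1', ih m (Nat.lt_succ_self m) k _ h2 h2']

lemma cartesian_eq_node {l : List α} (hl : l ≠ []) :
    cartesian l = .node (cartesian (l.take (minIdx l))) (cartesian (l.drop (minIdx l + 1))) := by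
  match l with
  | x :: xs =>
    have hmin : minIdx (x :: xs) < (x :: xs).length := minIdx_lt_length (by simp)
    show cartesianAux (xs.length + 1) (x :: xs) = _
    show BT.node (cartesianAux xs.length _) (cartesianAux xs.length _) = _
    unfold cartesian
    congr 1 <;> apply cartesianAux_congr
    · simp only [List.length_take]
      simp only [List.length_cons] at hmin
      omega
    · rfl
    · simp only [List.length_drop, List.length_cons]
      omega
    · rfl

lemma cartesian_nil : cartesian ([] : List α) = .leaf := rfl

lemma size_cartesian : ∀ (N : ℕ) (l : List α), l.length ≤ N → (cartesian l).size = l.length := by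
  intro N
  induction N with
  | zero =>
    intro l hl
    have : l = [] := List.length_eq_zero_iff.mp (Nat.le_zero.mp hl)
    subst this; rfl
  | succ N ih =>
    intro l hl
    rcases eq_or_ne l [] with rfl | hne
    · rfl
    · have hmin := minIdx_lt_length hne
      rw [cartesian_eq_node hne]
      have h1 : (l.take (minIdx l)).length ≤ N := by
        simp only [List.length_take]; omega
      have h2 : (l.drop (minIdx l + 1)).length ≤ N := by
        simp only [List.length_drop]; omega
      show (cartesian _).size + (cartesian _).size + 1 = _
      rw [ih _ h1, ih _ h2]
      simp only [List.length_take, List.length_drop]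
      omega

lemma inList_length : ∀ t : BT, t.inList.length = t.size := by
  intro t
  induction t with
  | leaf => rfl
  | node l r ihl ihr => simp [BT.inList, BT.size, ihl, ihr]; omega

lemma hLC_shift {t s : BT} {i j : ℕ} {b : Bool}
    (h1 : t.inList[i]? = (s.inList[j]?).map (List.cons b))
    (h2 : ∀ p, t.subtree? (b :: p) = s.subtree? p) :
    hasLeftChildAt t i ↔ hasLeftChildAt s j := by
  constructor
  · rintro ⟨p, ll, lr, r, hp, hs⟩
    rw [h1] at hp
    cases hq : s.inList[j]? with
    | none => rw [hq] at hp; simp at hp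
    | some q =>
      rw [hq] at hp
      obtain rfl : p = b :: q := by simpa using hp.symm
      exact ⟨q, ll, lr, r, hq, by rw [← h2]; exact hs⟩
  · rintro ⟨p, ll, lr, r, hp, hs⟩
    exact ⟨b :: p, ll, lr, r, by rw [h1, hp]; rfl, by rw [h2]; exact hs⟩

lemma subtree?_node_false (L R : BT) (p : List Bool) :
    (BT.node L R).subtree? (false :: p) = L.subtree? p := by
  simp [BT.subtree?]

lemma subtree?_node_true (L R : BT) (p : List Bool) :
    (BT.node L R).subtree? (true :: p) = R.subtree? p := by
  simp [BT.subtree?]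

lemma hLC_node_left (L R : BT) (i : ℕ) (hi : i < L.inList.length) :
    hasLeftChildAt (.node L R) i ↔ hasLeftChildAt L i := by
  apply hLC_shift (b := false)
  · show ((L.inList.map (List.cons false)) ++ _)[i]? = _
    rw [List.getElem?_append_left (by simpa using hi)]
    simp
  · exact subtree?_node_false L R

lemma hLC_node_right (L R : BT) (j : ℕ) :
    hasLeftChildAt (.node L R) (L.inList.length + 1 + j) ↔ hasLeftChildAt R j := by
  apply hLC_shift (b := true)
  · show ((L.inList.map (List.cons false)) ++ ([] :: R.inList.map (List.cons true)))[L.inList.length + 1 + j]? = _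
    rw [List.getElem?_append_right (by simp; omega)]
    have : L.inList.length + 1 + j - (L.inList.map (List.cons false)).length = j + 1 := by
      simp; omega
    rw [this]
    simp
  · exact subtree?_node_true L R

lemma hLC_node_root (L R : BT) :
    hasLeftChildAt (.node L R) L.inList.length ↔ ∃ ll lr, L = .node ll lr := by
  have h1 : (BT.node L R).inList[L.inList.length]? = some [] := by
    show ((L.inList.map (List.cons false)) ++ ([] :: R.inList.map (List.cons true)))[L.inList.length]? = _
    rw [List.getElem?_append_right (by simp)]
    simp
  constructor
  · rintro ⟨p, ll, lr, r, hp, hs⟩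
    rw [h1] at hp
    obtain rfl : p = [] := by simpa using hp.symm
    have hs' : BT.node L R = BT.node (BT.node ll lr) r := by
      have : (BT.node L R).subtree? [] = some (BT.node L R) := rfl
      rw [this] at hs
      exact Option.some_injective _ hs
    exact ⟨ll, lr, ((BT.node.injEq _ _ _ _).mp hs').1⟩
  · rintro ⟨ll, lr, rfl⟩
    exact ⟨[], ll, lr, R, h1, rfl⟩

lemma hLC_node_root' (L R : BT) (i : ℕ) (h : i = L.inList.length) :
    hasLeftChildAt (.node L R) i ↔ ∃ ll lr, L = .node ll lr := by
  subst h; exact hLC_node_root L R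

lemma hLC_node_right' (L R : BT) (i j : ℕ) (h : i = L.inList.length + 1 + j) :
    hasLeftChildAt (.node L R) i ↔ hasLeftChildAt R j := by
  subst h; exact hLC_node_right L R j

lemma key : ∀ (N : ℕ) (l : List α), l.length ≤ N → l.Nodup → ∀ (i : ℕ) (hi : i < l.length),
    (hasLeftChildAt (cartesian l) i ↔
      1 ≤ i ∧ l[i] < l[i-1]'(lt_of_le_of_lt (Nat.sub_le _ _) hi)) := by
  intro N
  induction N with
  | zero => intro l hl hnd i hi; omega
  | succ N ih =>
    intro l hl hnd i hi
    have hne : l ≠ [] := by intro h; subst h; simp at hi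
    have hk : minIdx l < l.length := minIdx_lt_length hne
    rw [cartesian_eq_node hne]
    set k := minIdx l with hkdef
    have hLlen : (cartesian (l.take k)).inList.length = k := by
      rw [inList_length, size_cartesian N _ (by simp only [List.length_take]; omega)]
      simp only [List.length_take]; omega
    have hRlen : (cartesian (l.drop (k+1))).inList.length = l.length - (k+1) := by
      rw [inList_length, size_cartesian N _ (by simp only [List.length_drop]; omega)]
      simp
    rcases lt_trichotomy i k with hik | hik | hik
    · -- i < k : in the left subtree
      rw [hLC_node_left _ _ _ (by omega)]
      have htake : (l.take k).length ≤ N := by simp only [List.length_take]; omega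
      rw [ih _ htake (hnd.sublist (List.take_sublist _ _)) i
        (by simp only [List.length_take]; omega)]
      constructor
      · rintro ⟨h1, h2⟩
        refine ⟨h1, ?_⟩
        rwa [List.getElem_take, List.getElem_take] at h2
      · rintro ⟨h1, h2⟩
        refine ⟨h1, ?_⟩
        rwa [List.getElem_take, List.getElem_take]
    · -- i = k : root
      subst hik
      rw [hLC_node_root' _ _ _ hLlen.symm]
      constructor
      · rintro ⟨ll, lr, hL⟩
        have hipos : 1 ≤ k := by
          by_contra h
          have hk0 : l.take k = l.take 0 := by congr 1; omega
          rw [hk0, List.take_zero, cartesian_nil] at hL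
          exact BT.noConfusion hL
        exact ⟨hipos, minIdx_lt hnd (by omega) hk (by omega)⟩
      · rintro ⟨h1, _⟩
        have htne : l.take k ≠ [] := by
          intro h
          have := congrArg List.length h
          simp only [List.length_take, List.length_nil] at this
          omega
        rw [cartesian_eq_node htne]
        exact ⟨_, _, rfl⟩
    · -- i > k : in the right subtree
      obtain ⟨j, rfl⟩ : ∃ j, i = k + 1 + j := ⟨i - k - 1, by omega⟩
      rw [hLC_node_right' _ _ _ j (by rw [hLlen])]
      have hdrop : (l.drop (k+1)).length ≤ N := by simp only [List.length_drop]; omega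
      have hjlt : j < (l.drop (k+1)).length := by simp only [List.length_drop]; omega
      rw [ih _ hdrop (hnd.sublist (List.drop_sublist _ _)) j hjlt]
      have hget : ∀ (m : ℕ) (hm : m < (l.drop (k+1)).length),
          (l.drop (k+1))[m] = l[k+1+m]'(by simp only [List.length_drop] at hm; omega) := by
        intro m hm
        rw [List.getElem_drop]
      have hidx : ∀ (hj1 : 1 ≤ j),
          l[k+1+j-1]'(by omega) = l[k+1+(j-1)]'(by omega) := by
        intro hj1
        congr 1
        omega
      constructor
      · rintro ⟨h1, h2⟩
        refine ⟨by omega, ?_⟩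
        rw [hget j hjlt, hget (j-1) (by omega)] at h2
        rw [hidx h1]
        exact h2
      · rintro ⟨h1, h2⟩
        rcases Nat.eq_zero_or_pos j with rfl | hj
        · exfalso
          have hlt : l[k] < l[k+1+0]'(by omega) := minIdx_lt hnd (by omega) hk (by omega)
          have he : l[k+1+0-1]'(by omega) = l[k] := by congr 1
          rw [he] at h2
          exact absurd (hlt.trans h2) (lt_irrefl _)
        · refine ⟨hj, ?_⟩
          rw [hget j hjlt, hget (j-1) (by omega), ← hidx hj]
          exact h2

end MyAux

/-- Node `v` of the Cartesian tree of `A` has a left child iff `v ≥ 1` (0-indexed)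
and `A[v] < A[v-1]`. -/
theorem stmt5 {α : Type*} [LinearOrder α] {n : ℕ} (A : Fin n → α)
    (hA : Function.Injective A) (v : Fin n) :
    hasLeftChildAt (cartesian (List.ofFn A)) (v : ℕ) ↔
      1 ≤ (v : ℕ) ∧
        A v < A ⟨(v : ℕ) - 1, Nat.lt_of_le_of_lt (Nat.sub_le _ _) v.isLt⟩ := by
  have hnd : (List.ofFn A).Nodup := List.nodup_ofFn.mpr hA
  have hv : (v : ℕ) < (List.ofFn A).length := by simpa using v.isLt
  rw [key (List.ofFn A).length (List.ofFn A) le_rfl hnd (v : ℕ) hv]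
  simp only [List.getElem_ofFn]
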